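/- For every integer m ≥ 1, every real x ≥ 0 and every real t > 0, Σ_{n=0}^∞ (−1)^n t^n L_n(x)/(n + m)! = exp(x) · ∫_0^∞ exp(−u) · (tu)^{−m/2} · J_m(2√(tu)) · J_0(2√(xu)) du, where the series converges and the integral converges. -/

import Mathlib

open MeasureTheory Real

/-- Bessel function of the first kind of integer order `m`. -/
noncomputable def besselJ (m : ℕ) (x : ℝ) : ℝ :=
  ∑' k : ℕ, (-1 : ℝ) ^ k * (x / 2) ^ (m + 2 * k) / (Nat.factorial k * Nat.factorial (m + k))

/-- Laguerre polynomial of degree `n`. -/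
noncomputable def laguerre (n : ℕ) (x : ℝ) : ℝ :=
  ∑ k ∈ Finset.range (n + 1),
    (-1 : ℝ) ^ k * Nat.factorial n * x ^ k /
      ((Nat.factorial k) ^ 2 * Nat.factorial (n - k))

section AuxLemmas

open Finset

private lemma lsib_alt_real (n : ℕ) :
    ∑ s ∈ range (n + 1), (-1 : ℝ) ^ s * (n.choose s) = if n = 0 then 1 else 0 := by
  have h := Int.alternating_sum_range_choose (n := n)
  have h2 : ((∑ s ∈ range (n + 1), (-1 : ℤ) ^ s * (n.choose s) : ℤ) : ℝ)
      = ((if n = 0 then 1 else 0 : ℤ) : ℝ) := by rw [h]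
  push_cast at h2
  exact h2

private lemma lsib_comb_inner (p i : ℕ) (hip : i ≤ p) :
    ∑ j ∈ range (p + 1), (-1 : ℝ) ^ j * (p.choose j) * (j.choose i) =
      if i = p then (-1 : ℝ) ^ p else 0 := by
  have hsplit : ∑ j ∈ range (p + 1), (-1 : ℝ) ^ j * (p.choose j) * (j.choose i)
      = ∑ j ∈ Ico i (p + 1), (-1 : ℝ) ^ j * (p.choose j) * (j.choose i) := by
    rw [range_eq_Ico, ← Finset.sum_Ico_consecutive _ (Nat.zero_le i) (by omega)]
    have : ∑ j ∈ Ico 0 i, (-1 : ℝ) ^ j * (p.choose j) * (j.choose i) = 0 := by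
      apply Finset.sum_eq_zero
      intro j hj
      simp only [mem_Ico] at hj
      rw [Nat.choose_eq_zero_of_lt hj.2]
      simp
    rw [this, zero_add]
  rw [hsplit, Finset.sum_Ico_eq_sum_range]
  have hrw : ∀ s ∈ range (p + 1 - i), (-1 : ℝ) ^ (i + s) * (p.choose (i + s)) * ((i + s).choose i)
      = ((-1 : ℝ) ^ i * (p.choose i)) * ((-1 : ℝ) ^ s * ((p - i).choose s)) := by
    intro s hs
    simp only [mem_range] at hs
    have h1 : i + s ≤ p := by omega
    have h2 : (p.choose (i + s)) * ((i + s).choose i) = (p.choose i) * ((p - i).choose s) := by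
      have := Nat.choose_mul (n := p) (k := i + s) (s := i) (Nat.le_add_right i s)
      simpa using this
    have h2' : ((p.choose (i + s)) : ℝ) * ((i + s).choose i)
        = (p.choose i) * ((p - i).choose s) := by
      exact_mod_cast congrArg (fun n : ℕ => (n : ℝ)) h2
    rw [pow_add]
    linear_combination ((-1 : ℝ) ^ i * (-1 : ℝ) ^ s) * h2'
  rw [Finset.sum_congr rfl hrw, ← Finset.mul_sum]
  have hpi : p + 1 - i = (p - i) + 1 := by omega
  rw [hpi, lsib_alt_real]
  rcases eq_or_lt_of_le hip with h | h
  · subst h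
    simp
  · rw [if_neg (by omega), if_neg (by omega), mul_zero]

private lemma lsib_comb (k p : ℕ) :
    ∑ j ∈ range (p + 1), (-1 : ℝ) ^ j * (p.choose j) * ((k + j).choose k) =
      (-1 : ℝ) ^ p * (k.choose p) := by
  have hvd : ∀ j, j ≤ p → (((k + j).choose k : ℝ)) =
      ∑ i ∈ range (p + 1), (k.choose i : ℝ) * (j.choose i) := by
    intro j hj
    have h1 : (k + j).choose k = (k + j).choose j := Nat.choose_symm_add
    have h2 : (k + j).choose j = ∑ ij ∈ Finset.HasAntidiagonal.antidiagonal j, k.choose ij.1 * j.choose ij.2 :=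
      Nat.add_choose_eq k j j
    have h3 : (∑ ij ∈ Finset.HasAntidiagonal.antidiagonal j, k.choose ij.1 * j.choose ij.2)
        = ∑ i ∈ range (j + 1), k.choose i * j.choose (j - i) :=
      Finset.Nat.sum_antidiagonal_eq_sum_range_succ_mk _ j
    have h4 : ∑ i ∈ range (j + 1), k.choose i * j.choose (j - i)
        = ∑ i ∈ range (j + 1), k.choose i * j.choose i := by
      apply Finset.sum_congr rfl
      intro i hi
      simp only [mem_range] at hi
      rw [Nat.choose_symm (by omega)]
    have h5 : ∑ i ∈ range (j + 1), k.choose i * j.choose i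
        = ∑ i ∈ range (p + 1), k.choose i * j.choose i := by
      apply Finset.sum_subset (Finset.range_subset_range.mpr (by omega))
      intro i _ hi
      simp only [mem_range, not_lt] at hi
      rw [Nat.choose_eq_zero_of_lt (show j < i by omega)]
      simp
    rw [h1, h2, h3, h4, h5]
    push_cast
    rfl
  calc ∑ j ∈ range (p + 1), (-1 : ℝ) ^ j * (p.choose j) * ((k + j).choose k)
      = ∑ j ∈ range (p + 1), ∑ i ∈ range (p + 1),
          (k.choose i : ℝ) * ((-1 : ℝ) ^ j * (p.choose j) * (j.choose i)) := by
        apply Finset.sum_congr rfl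
        intro j hj
        simp only [mem_range] at hj
        rw [hvd j (by omega), Finset.mul_sum]
        apply Finset.sum_congr rfl
        intro i _
        ring
    _ = ∑ i ∈ range (p + 1), (k.choose i : ℝ) *
          ∑ j ∈ range (p + 1), (-1 : ℝ) ^ j * (p.choose j) * (j.choose i) := by
        rw [Finset.sum_comm]
        simp_rw [Finset.mul_sum]
    _ = (-1 : ℝ) ^ p * (k.choose p) := by
        have : ∀ i ∈ range (p + 1), (k.choose i : ℝ) *
            (∑ j ∈ range (p + 1), (-1 : ℝ) ^ j * (p.choose j) * (j.choose i))
            = if i = p then (k.choose p : ℝ) * (-1 : ℝ) ^ p else 0 := by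
          intro i hi
          simp only [mem_range] at hi
          rw [lsib_comb_inner p i (by omega)]
          split
          · subst ‹i = p›; ring
          · simp
        rw [Finset.sum_congr rfl this, Finset.sum_ite_eq' (range (p + 1)) p]
        rw [if_pos (by simp)]
        ring

private lemma lsib_gamma_int (n : ℕ) :
    IntegrableOn (fun u : ℝ => Real.exp (-u) * u ^ n) (Set.Ioi 0) := by
  have h := Real.GammaIntegral_convergent (s := n + 1) (by positivity)
  refine h.congr_fun (fun u hu => ?_) measurableSet_Ioi
  simp only [add_sub_cancel_right, Real.rpow_natCast]

private lemma lsib_gamma_val (n : ℕ) :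
    ∫ u in Set.Ioi (0:ℝ), Real.exp (-u) * u ^ n = (Nat.factorial n : ℝ) := by
  have h := Real.Gamma_eq_integral (s := n + 1) (by positivity)
  rw [Real.Gamma_nat_eq_factorial] at h
  rw [h]
  refine setIntegral_congr_fun measurableSet_Ioi (fun u hu => ?_)
  rw [add_sub_cancel_right, Real.rpow_natCast]

private lemma lsib_choose_le_two_pow (n i : ℕ) : n.choose i ≤ 2 ^ n := by
  rcases le_or_gt i n with h | h
  · calc n.choose i ≤ ∑ j ∈ range (n + 1), n.choose j :=
        Finset.single_le_sum (fun j _ => Nat.zero_le _) (by simp [mem_range]; omega)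
      _ = 2 ^ n := Nat.sum_range_choose n
  · rw [Nat.choose_eq_zero_of_lt h]
    positivity

private lemma lsib_fact_bound (k j : ℕ) :
    ((k + j).factorial : ℝ) ≤ 2 ^ (k + j) * ((k.factorial : ℝ) * (j.factorial : ℝ)) := by
  have h1 : (k + j).factorial = (k + j).choose j * k.factorial * j.factorial :=
    (Nat.add_choose_mul_factorial_mul_factorial k j).symm
  have h2 : (k + j).choose j ≤ 2 ^ (k + j) := lsib_choose_le_two_pow (k + j) j
  have : (k + j).factorial ≤ 2 ^ (k + j) * (k.factorial * j.factorial) := by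
    rw [h1]
    calc (k + j).choose j * k.factorial * j.factorial
        ≤ 2 ^ (k + j) * k.factorial * j.factorial := by
          exact Nat.mul_le_mul_right _ (Nat.mul_le_mul_right _ h2)
      _ = 2 ^ (k + j) * (k.factorial * j.factorial) := by ring
  exact_mod_cast this

private lemma lsib_exp_tsum (y : ℝ) : Real.exp y = ∑' n : ℕ, y ^ n / (Nat.factorial n : ℝ) := by
  rw [Real.exp_eq_exp_ℝ, NormedSpace.exp_eq_tsum_div]

private lemma lsib_besselJ0_eq (y : ℝ) (hy : 0 ≤ y) :
    besselJ 0 (2 * Real.sqrt y) = ∑' j : ℕ, (-1 : ℝ) ^ j * y ^ j / ((Nat.factorial j : ℝ)) ^ 2 := by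
  unfold besselJ
  refine tsum_congr fun j => ?_
  have h2 : (2 * Real.sqrt y / 2) = Real.sqrt y := by ring
  have h3 : Real.sqrt y ^ (0 + 2 * j) = y ^ j := by
    rw [zero_add, pow_mul, Real.sq_sqrt hy]
  rw [h2, h3, zero_add, sq]

private lemma lsib_besselJm_eq (m : ℕ) (y : ℝ) (hy : 0 < y) :
    y ^ (-(m : ℝ) / 2) * besselJ m (2 * Real.sqrt y) =
      ∑' k : ℕ, (-1 : ℝ) ^ k * y ^ k / ((Nat.factorial k : ℝ) * (Nat.factorial (m + k) : ℝ)) := by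
  unfold besselJ
  rw [← tsum_mul_left]
  refine tsum_congr fun k => ?_
  have h2 : (2 * Real.sqrt y / 2) = Real.sqrt y := by ring
  have h1 : y ^ (-(m : ℝ) / 2) * Real.sqrt y ^ m = 1 := by
    rw [Real.sqrt_eq_rpow, ← Real.rpow_natCast (y ^ ((1 : ℝ)/2)) m, ← Real.rpow_mul hy.le,
      ← Real.rpow_add hy]
    rw [show (-(m : ℝ) / 2 + 1 / 2 * (m : ℝ)) = 0 by ring, Real.rpow_zero]
  rw [h2, pow_add, pow_mul, Real.sq_sqrt hy.le]
  calc y ^ (-(m : ℝ) / 2) * ((-1 : ℝ) ^ k * (Real.sqrt y ^ m * y ^ k)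
        / ((Nat.factorial k : ℝ) * (Nat.factorial (m + k) : ℝ)))
      = (y ^ (-(m : ℝ) / 2) * Real.sqrt y ^ m) * ((-1 : ℝ) ^ k * y ^ k
        / ((Nat.factorial k : ℝ) * (Nat.factorial (m + k) : ℝ))) := by ring
    _ = _ := by rw [h1, one_mul]

end AuxLemmas

set_option maxHeartbeats 2000000 in
/-- Integral representation of `Σ_{n≥0} (−1)ⁿ tⁿ Lₙ(x)/(n+m)!` for `m ≥ 1`,
`x ≥ 0`, `t > 0`; the series and the integral both converge. -/
theorem laguerre_series_eq_integral_besselJ (m : ℕ) (x t : ℝ)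
    (hm : 1 ≤ m) (hx : 0 ≤ x) (ht : 0 < t) :
    Summable (fun n : ℕ => (-1 : ℝ) ^ n * t ^ n * laguerre n x / Nat.factorial (n + m)) ∧
    IntegrableOn
      (fun u : ℝ => Real.exp (-u) * (t * u) ^ (-(m : ℝ) / 2) *
        besselJ m (2 * Real.sqrt (t * u)) * besselJ 0 (2 * Real.sqrt (x * u))) (Set.Ioi 0) ∧
    (∑' n : ℕ, (-1 : ℝ) ^ n * t ^ n * laguerre n x / Nat.factorial (n + m)) =
      Real.exp x *
        ∫ u in Set.Ioi (0 : ℝ),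
          Real.exp (-u) * (t * u) ^ (-(m : ℝ) / 2) *
            besselJ m (2 * Real.sqrt (t * u)) * besselJ 0 (2 * Real.sqrt (x * u)) := by
  classical
  set c : ℕ → ℝ :=
    fun k => (-1 : ℝ) ^ k * t ^ k / ((Nat.factorial k : ℝ) * (Nat.factorial (m + k) : ℝ))
    with hc_def
  set d : ℕ → ℝ := fun j => (-1 : ℝ) ^ j * x ^ j / ((Nat.factorial j : ℝ)) ^ 2 with hd_def
  set F : ℕ × ℕ → ℝ → ℝ :=
    fun q u => c q.1 * d q.2 * (Real.exp (-u) * u ^ (q.1 + q.2)) with hF_def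
  have hfacpos : ∀ n : ℕ, (0 : ℝ) < (Nat.factorial n : ℝ) := fun n => by
    exact_mod_cast Nat.factorial_pos n
  have hc_abs : ∀ k, |c k| = t ^ k / ((Nat.factorial k : ℝ) * (Nat.factorial (m + k) : ℝ)) := by
    intro k
    simp only [hc_def, abs_div, abs_mul, abs_pow, abs_neg, abs_one, one_pow, one_mul,
      abs_of_nonneg ht.le, Nat.abs_cast]
  have hd_abs : ∀ j, |d j| = x ^ j / ((Nat.factorial j : ℝ)) ^ 2 := by
    intro j
    simp only [hd_def, abs_div, abs_mul, abs_pow, abs_neg, abs_one, one_pow, one_mul,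
      abs_of_nonneg hx, Nat.abs_cast]
  -- summable majorant
  have hsum1 : Summable (fun k : ℕ => (2 * t) ^ k / (Nat.factorial (m + k) : ℝ)) := by
    refine Summable.of_nonneg_of_le (fun k => by positivity) (fun k => ?_)
      (Real.summable_pow_div_factorial (2 * t))
    have hle : (Nat.factorial k : ℝ) ≤ (Nat.factorial (m + k) : ℝ) := by
      exact_mod_cast Nat.factorial_le (Nat.le_add_left k m)
    gcongr
  have hsum2 := Real.summable_pow_div_factorial (2 * x)
  have hM : Summable (fun q : ℕ × ℕ => (2 * t) ^ q.1 / (Nat.factorial (m + q.1) : ℝ) *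
      ((2 * x) ^ q.2 / (Nat.factorial q.2 : ℝ))) :=
    hsum1.mul_of_nonneg hsum2 (fun k => by positivity) (fun j => by positivity)
  have hcd : ∀ q : ℕ × ℕ, |c q.1 * d q.2| * ((Nat.factorial (q.1 + q.2) : ℝ)) ≤
      (2 * t) ^ q.1 / (Nat.factorial (m + q.1) : ℝ) *
      ((2 * x) ^ q.2 / (Nat.factorial q.2 : ℝ)) := by
    rintro ⟨k, j⟩
    rw [abs_mul, hc_abs k, hd_abs j]
    have hK := hfacpos k
    have hM' := hfacpos (m + k)
    have hJ := hfacpos j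
    calc t ^ k / ((Nat.factorial k : ℝ) * (Nat.factorial (m + k) : ℝ)) *
          (x ^ j / ((Nat.factorial j : ℝ)) ^ 2) * ((Nat.factorial (k + j) : ℝ))
        ≤ t ^ k / ((Nat.factorial k : ℝ) * (Nat.factorial (m + k) : ℝ)) *
          (x ^ j / ((Nat.factorial j : ℝ)) ^ 2) *
          (2 ^ (k + j) * ((Nat.factorial k : ℝ) * (Nat.factorial j : ℝ))) :=
          mul_le_mul_of_nonneg_left (lsib_fact_bound k j) (by positivity)
      _ = (2 * t) ^ k / (Nat.factorial (m + k) : ℝ) *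
          ((2 * x) ^ j / (Nat.factorial j : ℝ)) := by
          field_simp
          ring
  have hsum_cd : Summable (fun q : ℕ × ℕ => |c q.1 * d q.2| * ((Nat.factorial (q.1 + q.2) : ℝ))) :=
    hM.of_nonneg_of_le (fun q => by positivity) hcd
  have hG : Summable (fun q : ℕ × ℕ => c q.1 * d q.2 * ((Nat.factorial (q.1 + q.2) : ℝ))) := by
    apply Summable.of_abs
    have heq : (fun q : ℕ × ℕ => |c q.1 * d q.2 * ((Nat.factorial (q.1 + q.2) : ℝ))|)
        = fun q : ℕ × ℕ => |c q.1 * d q.2| * ((Nat.factorial (q.1 + q.2) : ℝ)) := by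
      funext q
      rw [abs_mul, Nat.abs_cast]
    rw [heq]
    exact hsum_cd
  -- pointwise summability
  have hA : ∀ u : ℝ, Summable (fun k : ℕ => ‖c k * u ^ k‖) := by
    intro u
    refine Summable.of_nonneg_of_le (fun k => norm_nonneg _) (fun k => ?_)
      (Real.summable_pow_div_factorial (t * |u|))
    rw [Real.norm_eq_abs, abs_mul, hc_abs k, abs_pow]
    have h1 : (1 : ℝ) ≤ (Nat.factorial (m + k) : ℝ) := by
      exact_mod_cast Nat.one_le_iff_ne_zero.mpr (Nat.factorial_ne_zero (m + k))
    calc t ^ k / ((Nat.factorial k : ℝ) * (Nat.factorial (m + k) : ℝ)) * |u| ^ k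
        ≤ t ^ k / ((Nat.factorial k : ℝ) * 1) * |u| ^ k := by
          refine mul_le_mul_of_nonneg_right ?_ (pow_nonneg (abs_nonneg u) k)
          gcongr
      _ = (t * |u|) ^ k / (Nat.factorial k : ℝ) := by
          rw [mul_one, mul_pow]
          ring
  have hB : ∀ u : ℝ, Summable (fun j : ℕ => ‖d j * u ^ j‖) := by
    intro u
    refine Summable.of_nonneg_of_le (fun j => norm_nonneg _) (fun j => ?_)
      (Real.summable_pow_div_factorial (x * |u|))
    rw [Real.norm_eq_abs, abs_mul, hd_abs j, abs_pow]
    have h1 : (1 : ℝ) ≤ (Nat.factorial j : ℝ) := by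
      exact_mod_cast Nat.one_le_iff_ne_zero.mpr (Nat.factorial_ne_zero j)
    calc x ^ j / ((Nat.factorial j : ℝ)) ^ 2 * |u| ^ j
        ≤ x ^ j / ((Nat.factorial j : ℝ) * 1) * |u| ^ j := by
          rw [sq]
          refine mul_le_mul_of_nonneg_right ?_ (pow_nonneg (abs_nonneg u) j)
          gcongr
      _ = (x * |u|) ^ j / (Nat.factorial j : ℝ) := by
          rw [mul_one, mul_pow]
          ring
  have hFsummable : ∀ u : ℝ, Summable (fun q : ℕ × ℕ => F q u) := by
    intro u
    have h := summable_mul_of_summable_norm (hA u) (hB u)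
    have h2 := h.mul_left (Real.exp (-u))
    refine h2.congr fun q => ?_
    simp only [hF_def]
    rw [pow_add]
    ring
  -- pointwise identity on Ioi 0
  have hptwise : ∀ u ∈ Set.Ioi (0 : ℝ),
      Real.exp (-u) * (t * u) ^ (-(m : ℝ) / 2) * besselJ m (2 * Real.sqrt (t * u)) *
        besselJ 0 (2 * Real.sqrt (x * u)) = ∑' q : ℕ × ℕ, F q u := by
    intro u hu
    have hu' : (0 : ℝ) < u := hu
    have htu : 0 < t * u := mul_pos ht hu'
    have hxu : 0 ≤ x * u := mul_nonneg hx hu'.le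
    have e1 : (t * u) ^ (-(m : ℝ) / 2) * besselJ m (2 * Real.sqrt (t * u))
        = ∑' k : ℕ, c k * u ^ k := by
      rw [lsib_besselJm_eq m (t * u) htu]
      refine tsum_congr fun k => ?_
      simp only [hc_def]
      rw [mul_pow]
      ring
    have e2 : besselJ 0 (2 * Real.sqrt (x * u)) = ∑' j : ℕ, d j * u ^ j := by
      rw [lsib_besselJ0_eq (x * u) hxu]
      refine tsum_congr fun j => ?_
      simp only [hd_def]
      rw [mul_pow]
      ring
    have e3 : (∑' k : ℕ, c k * u ^ k) * (∑' j : ℕ, d j * u ^ j)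
        = ∑' q : ℕ × ℕ, (c q.1 * u ^ q.1) * (d q.2 * u ^ q.2) :=
      tsum_mul_tsum_of_summable_norm (hA u) (hB u)
    have hassoc : Real.exp (-u) * (t * u) ^ (-(m : ℝ) / 2) *
        besselJ m (2 * Real.sqrt (t * u)) * besselJ 0 (2 * Real.sqrt (x * u))
        = Real.exp (-u) * (((t * u) ^ (-(m : ℝ) / 2) * besselJ m (2 * Real.sqrt (t * u))) *
            besselJ 0 (2 * Real.sqrt (x * u))) := by ring
    rw [hassoc, e1, e2, e3, ← tsum_mul_left]
    refine tsum_congr fun q => ?_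
    simp only [hF_def]
    rw [pow_add]
    ring
  -- integrability of each term and integral values
  have hFint : ∀ q : ℕ × ℕ, IntegrableOn (F q) (Set.Ioi 0) := fun q =>
    (lsib_gamma_int (q.1 + q.2)).const_mul _
  have hFval : ∀ q : ℕ × ℕ, ∫ u in Set.Ioi (0 : ℝ), F q u
      = c q.1 * d q.2 * (Nat.factorial (q.1 + q.2) : ℝ) := by
    intro q
    simp only [hF_def]
    rw [integral_const_mul, lsib_gamma_val]
  have hFnormval : ∀ q : ℕ × ℕ, ∫ u in Set.Ioi (0 : ℝ), ‖F q u‖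
      = |c q.1 * d q.2| * (Nat.factorial (q.1 + q.2) : ℝ) := by
    intro q
    have heq : ∀ u ∈ Set.Ioi (0 : ℝ), ‖F q u‖
        = |c q.1 * d q.2| * (Real.exp (-u) * u ^ (q.1 + q.2)) := by
      intro u hu
      have hu' : (0 : ℝ) < u := hu
      have habs : |Real.exp (-u) * u ^ (q.1 + q.2)| = Real.exp (-u) * u ^ (q.1 + q.2) :=
        abs_of_nonneg (by positivity)
      rw [Real.norm_eq_abs]
      simp only [hF_def]
      rw [abs_mul, habs]
    rw [setIntegral_congr_fun measurableSet_Ioi heq, integral_const_mul, lsib_gamma_val]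
  have hnormSum : Summable (fun q : ℕ × ℕ => ∫ u in Set.Ioi (0 : ℝ), ‖F q u‖) :=
    hsum_cd.congr fun q => (hFnormval q).symm
  have hswap : ∑' q : ℕ × ℕ, ∫ u in Set.Ioi (0 : ℝ), F q u
      = ∫ u in Set.Ioi (0 : ℝ), ∑' q : ℕ × ℕ, F q u :=
    integral_tsum_of_summable_integral_norm hFint hnormSum
  -- measurability and integrability of the tsum
  have hFmeas : ∀ q : ℕ × ℕ, Measurable (F q) := by
    intro q
    simp only [hF_def]
    exact measurable_const.mul ((Real.measurable_exp.comp measurable_neg).mul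
      (measurable_id.pow_const _))
  have hg_meas : Measurable (fun u : ℝ => ∑' q : ℕ × ℕ, F q u) := by
    apply measurable_of_tendsto_metrizable' (Filter.atTop : Filter (Finset (ℕ × ℕ)))
      (fun s => s.measurable_sum fun q _ => hFmeas q)
    rw [tendsto_pi_nhds]
    exact fun u => (hFsummable u).hasSum
  have hg_int : IntegrableOn (fun u : ℝ => ∑' q : ℕ × ℕ, F q u) (Set.Ioi 0) := by
    refine ⟨hg_meas.aestronglyMeasurable, ?_⟩
    rw [hasFiniteIntegral_def]
    calc ∫⁻ u in Set.Ioi (0 : ℝ), ‖∑' q : ℕ × ℕ, F q u‖₊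
        ≤ ∫⁻ u in Set.Ioi (0 : ℝ), ∑' q : ℕ × ℕ, (‖F q u‖₊ : ENNReal) := by
          apply lintegral_mono
          intro u
          have hsn : Summable (fun q : ℕ × ℕ => ‖F q u‖) := by
            simpa [Real.norm_eq_abs] using (hFsummable u).abs
          calc (‖∑' q : ℕ × ℕ, F q u‖₊ : ENNReal)
              = ENNReal.ofReal ‖∑' q : ℕ × ℕ, F q u‖ := (ofReal_norm_eq_enorm _).symm
            _ ≤ ENNReal.ofReal (∑' q : ℕ × ℕ, ‖F q u‖) :=
                ENNReal.ofReal_le_ofReal (norm_tsum_le_tsum_norm hsn)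
            _ = ∑' q : ℕ × ℕ, ENNReal.ofReal ‖F q u‖ :=
                ENNReal.ofReal_tsum_of_nonneg (fun q => norm_nonneg _) hsn
            _ = ∑' q : ℕ × ℕ, (‖F q u‖₊ : ENNReal) :=
                tsum_congr fun q => ofReal_norm_eq_enorm _
      _ = ∑' q : ℕ × ℕ, ∫⁻ u in Set.Ioi (0 : ℝ), ‖F q u‖₊ :=
          lintegral_tsum fun q => ((hFmeas q).nnnorm.coe_nnreal_ennreal).aemeasurable
      _ = ∑' q : ℕ × ℕ, ENNReal.ofReal (∫ u in Set.Ioi (0 : ℝ), ‖F q u‖) :=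
          tsum_congr fun q => (ofReal_integral_norm_eq_lintegral_enorm (hFint q)).symm
      _ = ENNReal.ofReal (∑' q : ℕ × ℕ, ∫ u in Set.Ioi (0 : ℝ), ‖F q u‖) :=
          (ENNReal.ofReal_tsum_of_nonneg
            (fun q => integral_nonneg fun u => norm_nonneg _) hnormSum).symm
      _ < ⊤ := ENNReal.ofReal_lt_top
  have hae : (fun u : ℝ => Real.exp (-u) * (t * u) ^ (-(m : ℝ) / 2) *
      besselJ m (2 * Real.sqrt (t * u)) * besselJ 0 (2 * Real.sqrt (x * u)))
      =ᵐ[volume.restrict (Set.Ioi 0)] (fun u : ℝ => ∑' q : ℕ × ℕ, F q u) := by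
    filter_upwards [ae_restrict_mem measurableSet_Ioi] with u hu
    exact hptwise u hu
  have hint : IntegrableOn
      (fun u : ℝ => Real.exp (-u) * (t * u) ^ (-(m : ℝ) / 2) *
        besselJ m (2 * Real.sqrt (t * u)) * besselJ 0 (2 * Real.sqrt (x * u)))
      (Set.Ioi 0) := hg_int.congr hae.symm
  -- series side
  set W : ℕ → ℝ := fun k => ∑' j : ℕ, d j * (Nat.factorial (k + j) : ℝ) with hW_def
  have hdfac_bound : ∀ k j : ℕ, ‖d j * (Nat.factorial (k + j) : ℝ)‖
      ≤ 2 ^ k * (Nat.factorial k : ℝ) * ((2 * x) ^ j / (Nat.factorial j : ℝ)) := by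
    intro k j
    rw [Real.norm_eq_abs, abs_mul, Nat.abs_cast, hd_abs j]
    have hJ := hfacpos j
    calc x ^ j / ((Nat.factorial j : ℝ)) ^ 2 * (Nat.factorial (k + j) : ℝ)
        ≤ x ^ j / ((Nat.factorial j : ℝ)) ^ 2 *
            (2 ^ (k + j) * ((Nat.factorial k : ℝ) * (Nat.factorial j : ℝ))) :=
          mul_le_mul_of_nonneg_left (lsib_fact_bound k j) (by positivity)
      _ = 2 ^ k * (Nat.factorial k : ℝ) * ((2 * x) ^ j / (Nat.factorial j : ℝ)) := by
          rw [pow_add, mul_pow]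
          field_simp
  have hdfac_sum : ∀ k : ℕ, Summable (fun j : ℕ => ‖d j * (Nat.factorial (k + j) : ℝ)‖) := by
    intro k
    refine Summable.of_nonneg_of_le (fun j => norm_nonneg _) (hdfac_bound k)
      (hsum2.mul_left _)
  have hexp_norm : Summable (fun n : ℕ => ‖x ^ n / (Nat.factorial n : ℝ)‖) := by
    refine (Real.summable_pow_div_factorial |x|).congr fun n => ?_
    rw [Real.norm_eq_abs, abs_div, abs_pow, Nat.abs_cast]
  -- the key Cauchy-product identity
  have hcauchy : ∀ k : ℕ, Real.exp x * W k = (Nat.factorial k : ℝ) * laguerre k x := by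
    intro k
    rw [lsib_exp_tsum x, hW_def]
    rw [tsum_mul_tsum_eq_tsum_sum_range_of_summable_norm hexp_norm (hdfac_sum k)]
    have hinner : ∀ p : ℕ, (∑ i ∈ Finset.range (p + 1),
        (x ^ i / (Nat.factorial i : ℝ)) * (d (p - i) * (Nat.factorial (k + (p - i)) : ℝ)))
        = (-1 : ℝ) ^ p * (k.choose p : ℝ) * (Nat.factorial k : ℝ) * x ^ p
            / (Nat.factorial p : ℝ) := by
      intro p
      rw [← Finset.sum_range_reflect]
      have hterm : ∀ j ∈ Finset.range (p + 1),
          (x ^ (p + 1 - 1 - j) / (Nat.factorial (p + 1 - 1 - j) : ℝ)) *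
            (d (p - (p + 1 - 1 - j)) * (Nat.factorial (k + (p - (p + 1 - 1 - j))) : ℝ))
          = ((x ^ p * (Nat.factorial k : ℝ) / (Nat.factorial p : ℝ)) *
              ((-1 : ℝ) ^ j * (p.choose j : ℝ) * ((k + j).choose k : ℝ))) := by
        intro j hj
        simp only [Finset.mem_range] at hj
        have hjp : j ≤ p := by omega
        have hs1 : p + 1 - 1 - j = p - j := by omega
        have hs2 : p - (p - j) = j := by omega
        rw [hs1, hs2]
        simp only [hd_def]
        have e1 : ((p.choose j : ℝ)) * (Nat.factorial j : ℝ) * (Nat.factorial (p - j) : ℝ)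
            = (Nat.factorial p : ℝ) := by
          exact_mod_cast congrArg (fun n : ℕ => (n : ℝ))
            (Nat.choose_mul_factorial_mul_factorial hjp)
        have e2n : (k + j).choose k * k.factorial * j.factorial = (k + j).factorial := by
          rw [Nat.choose_symm_add]
          exact Nat.add_choose_mul_factorial_mul_factorial k j
        have e2 : (((k + j).choose k : ℝ)) * (Nat.factorial k : ℝ) * (Nat.factorial j : ℝ)
            = (Nat.factorial (k + j) : ℝ) := by exact_mod_cast congrArg (fun n : ℕ => (n : ℝ)) e2n
        have hxp : x ^ (p - j) * x ^ j = x ^ p := by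
          rw [← pow_add, Nat.sub_add_cancel hjp]
        have hKne := (hfacpos (p - j)).ne'
        have hJne := (hfacpos j).ne'
        have hPne := (hfacpos p).ne'
        field_simp
        rw [← e1, ← e2, ← hxp]
        ring
      rw [Finset.sum_congr rfl hterm, ← Finset.mul_sum, lsib_comb k p]
      ring
    rw [tsum_congr hinner]
    have hzero : ∀ p ∉ Finset.range (k + 1),
        (-1 : ℝ) ^ p * (k.choose p : ℝ) * (Nat.factorial k : ℝ) * x ^ p
          / (Nat.factorial p : ℝ) = 0 := by
      intro p hp
      simp only [Finset.mem_range, not_lt] at hp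
      rw [Nat.choose_eq_zero_of_lt (by omega)]
      simp
    rw [tsum_eq_sum hzero]
    unfold laguerre
    rw [Finset.mul_sum]
    refine Finset.sum_congr rfl fun p hp => ?_
    simp only [Finset.mem_range] at hp
    have hpk : p ≤ k := by omega
    have e1 : ((k.choose p : ℝ)) * (Nat.factorial p : ℝ) * (Nat.factorial (k - p) : ℝ)
        = (Nat.factorial k : ℝ) := by
      exact_mod_cast congrArg (fun n : ℕ => (n : ℝ))
        (Nat.choose_mul_factorial_mul_factorial hpk)
    have hPne := (hfacpos p).ne'
    have hKPne := (hfacpos (k - p)).ne'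
    field_simp
    rw [← e1]
    ring
  -- summability of c k * W k
  set E : ℝ := ∑' j : ℕ, (2 * x) ^ j / (Nat.factorial j : ℝ) with hE_def
  have hWbound : ∀ k : ℕ, |W k| ≤ 2 ^ k * (Nat.factorial k : ℝ) * E := by
    intro k
    have h1 : |W k| ≤ ∑' j : ℕ, ‖d j * (Nat.factorial (k + j) : ℝ)‖ := by
      rw [hW_def]
      simpa [Real.norm_eq_abs] using norm_tsum_le_tsum_norm (hdfac_sum k)
    refine h1.trans ?_
    have h2 : ∑' j : ℕ, ‖d j * (Nat.factorial (k + j) : ℝ)‖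
        ≤ ∑' j : ℕ, 2 ^ k * (Nat.factorial k : ℝ) * ((2 * x) ^ j / (Nat.factorial j : ℝ)) :=
      Summable.tsum_le_tsum (hdfac_bound k) (hdfac_sum k) (hsum2.mul_left _)
    refine h2.trans_eq ?_
    rw [tsum_mul_left, hE_def]
  have hWsum : Summable (fun k : ℕ => c k * W k) := by
    refine Summable.of_norm_bounded
      (hsum1.mul_right E) (fun k => ?_)
    rw [Real.norm_eq_abs, abs_mul, hc_abs k]
    calc t ^ k / ((Nat.factorial k : ℝ) * (Nat.factorial (m + k) : ℝ)) * |W k|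
        ≤ t ^ k / ((Nat.factorial k : ℝ) * (Nat.factorial (m + k) : ℝ)) *
            (2 ^ k * (Nat.factorial k : ℝ) * E) :=
          mul_le_mul_of_nonneg_left (hWbound k) (by positivity)
      _ = (2 * t) ^ k / (Nat.factorial (m + k) : ℝ) * E := by
          have hKne := (hfacpos k).ne'
          have hMne := (hfacpos (m + k)).ne'
          rw [mul_pow]
          field_simp
  have hfiber : ∀ k : ℕ, (∑' j : ℕ, c k * d j * (Nat.factorial (k + j) : ℝ)) = c k * W k := by
    intro k
    rw [hW_def, ← tsum_mul_left]
    refine tsum_congr fun j => ?_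
    ring
  have hseries : ∀ k : ℕ, Real.exp x * (c k * W k)
      = (-1 : ℝ) ^ k * t ^ k * laguerre k x / Nat.factorial (k + m) := by
    intro k
    have hkm : m + k = k + m := Nat.add_comm m k
    calc Real.exp x * (c k * W k) = c k * (Real.exp x * W k) := by ring
      _ = c k * ((Nat.factorial k : ℝ) * laguerre k x) := by rw [hcauchy k]
      _ = (-1 : ℝ) ^ k * t ^ k * laguerre k x / Nat.factorial (k + m) := by
          simp only [hc_def, hkm]
          have hKne := (hfacpos k).ne'
          have hKMne := (hfacpos (k + m)).ne'
          field_simp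
  have hsummable_LHS :
      Summable (fun n : ℕ => (-1 : ℝ) ^ n * t ^ n * laguerre n x / Nat.factorial (n + m)) :=
    ((hWsum.mul_left (Real.exp x)).congr hseries)
  refine ⟨hsummable_LHS, hint, ?_⟩
  calc ∑' n : ℕ, (-1 : ℝ) ^ n * t ^ n * laguerre n x / Nat.factorial (n + m)
      = ∑' k : ℕ, Real.exp x * (c k * W k) := tsum_congr fun k => (hseries k).symm
    _ = Real.exp x * ∑' k : ℕ, c k * W k := tsum_mul_left
    _ = Real.exp x * ∑' q : ℕ × ℕ, c q.1 * d q.2 * (Nat.factorial (q.1 + q.2) : ℝ) := by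
        congr 1
        rw [Summable.tsum_prod' hG fun k => hG.prod_factor k]
        exact (tsum_congr hfiber).symm
    _ = Real.exp x * ∑' q : ℕ × ℕ, ∫ u in Set.Ioi (0 : ℝ), F q u := by
        congr 1
        exact tsum_congr fun q => (hFval q).symm
    _ = Real.exp x * ∫ u in Set.Ioi (0 : ℝ), ∑' q : ℕ × ℕ, F q u := by rw [hswap]
    _ = Real.exp x * ∫ u in Set.Ioi (0 : ℝ),
          Real.exp (-u) * (t * u) ^ (-(m : ℝ) / 2) *
            besselJ m (2 * Real.sqrt (t * u)) * besselJ 0 (2 * Real.sqrt (x * u)) := by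
        congr 1
        exact (integral_congr_ae hae).symm
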